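/- Let G be a finite connected simple graph and x, y two distinct vertices. If κ_LLY(x,y) > 0, then d(x,y) ≤ ⌊2/κ_LLY(x,y)⌋. -/

import Mathlib

open Finset

/-- A probability measure on a finite set, given as a density. -/
def IsProbMeasure {V : Type*} [Fintype V] (m : V → ℝ) : Prop :=
  (∀ x, 0 ≤ m x) ∧ ∑ x, m x = 1

/-- A coupling between two probability measures on a finite set. -/
def IsCoupling {V : Type*} [Fintype V] (A : V × V → ℝ) (m₁ m₂ : V → ℝ) : Prop :=
  (∀ p, 0 ≤ A p) ∧ (∀ x, ∑ y, A (x, y) = m₁ x) ∧ (∀ y, ∑ x, A (x, y) = m₂ y)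

/-- The Wasserstein-1 (transportation) distance between two probability measures on a
finite set, with respect to a cost `d`. -/
noncomputable def W {V : Type*} [Fintype V] (d : V → V → ℝ) (m₁ m₂ : V → ℝ) : ℝ :=
  sInf {c | ∃ A, IsCoupling A m₁ m₂ ∧ c = ∑ p : V × V, A p * d p.1 p.2}

lemma W_symm {V : Type*} [Fintype V] (d : V → V → ℝ) (hd : ∀ x y, d x y = d y x)
    (m₁ m₂ : V → ℝ) : W d m₁ m₂ = W d m₂ m₁ := by
  have key : ∀ m₁ m₂ : V → ℝ,
      {c | ∃ A, IsCoupling A m₁ m₂ ∧ c = ∑ p : V × V, A p * d p.1 p.2} ⊆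
      {c | ∃ A, IsCoupling A m₂ m₁ ∧ c = ∑ p : V × V, A p * d p.1 p.2} := by
    rintro m₁ m₂ c ⟨A, ⟨h0, h1, h2⟩, rfl⟩
    refine ⟨fun p => A (p.2, p.1), ⟨fun p => h0 _, fun x => h2 x, fun y => h1 y⟩, ?_⟩
    refine Fintype.sum_equiv (Equiv.prodComm V V) _ _ ?_
    intro p
    simp [Equiv.prodComm, hd p.1 p.2]
  unfold W
  congr 1
  exact Set.Subset.antisymm (key m₁ m₂) (key m₂ m₁)

/-- The `α`-lazy random walk measure at a vertex `x` of a graph. -/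
noncomputable def lazyWalk {V : Type*} [Fintype V] [DecidableEq V] (G : SimpleGraph V)
    [DecidableRel G.Adj] (α : ℝ) (x : V) : V → ℝ :=
  fun v => if v = x then α else if G.Adj x v then (1 - α) / (G.degree x) else 0

/-- The `α`-Ricci curvature `κ_α(x,y) = 1 - W(m_x^α, m_y^α)/d(x,y)`. -/
noncomputable def kappaAlpha {V : Type*} [Fintype V] [DecidableEq V] (G : SimpleGraph V)
    [DecidableRel G.Adj] (α : ℝ) (x y : V) : ℝ :=
  1 - W (fun a b => (G.dist a b : ℝ)) (lazyWalk G α x) (lazyWalk G α y) / (G.dist x y)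

lemma kappaAlpha_symm {V : Type*} [Fintype V] [DecidableEq V] (G : SimpleGraph V)
    [DecidableRel G.Adj] (α : ℝ) (x y : V) :
    kappaAlpha G α x y = kappaAlpha G α y x := by
  unfold kappaAlpha
  rw [W_symm _ (fun a b => by rw [SimpleGraph.dist_comm]),
    SimpleGraph.dist_comm]

/-- The Lin–Lu–Yau Ricci curvature `κ_LLY(x,y) = lim_{α → 1⁻} κ_α(x,y)/(1-α)`. -/
noncomputable def kappaLLY {V : Type*} [Fintype V] [DecidableEq V] (G : SimpleGraph V)
    [DecidableRel G.Adj] (x y : V) : ℝ :=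
  Filter.limUnder (nhdsWithin 1 (Set.Ico (0:ℝ) 1)) (fun α => kappaAlpha G α x y / (1 - α))

lemma kappaLLY_symm {V : Type*} [Fintype V] [DecidableEq V] (G : SimpleGraph V)
    [DecidableRel G.Adj] (x y : V) : kappaLLY G x y = kappaLLY G y x := by
  unfold kappaLLY
  congr 1
  funext α
  rw [kappaAlpha_symm]

/-- Integral `α`-Ricci curvature `I^α_{κ₀}`: total amount of `α`-Ricci curvature below the
threshold `(1-α)κ₀`, summed over the edges of `G`. -/
noncomputable def IAlpha {V : Type*} [Fintype V] [DecidableEq V] (G : SimpleGraph V)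
    [DecidableRel G.Adj] (α κ₀ : ℝ) : ℝ :=
  ∑ e ∈ G.edgeFinset,
    Sym2.lift ⟨fun x y => max 0 ((1 - α) * κ₀ - kappaAlpha G α x y),
      fun x y => by simp only []; rw [kappaAlpha_symm]⟩ e

/-- Integral Lin–Lu–Yau Ricci curvature `I_{κ₀}`: total amount of Lin–Lu–Yau Ricci curvature
below the threshold `κ₀`, summed over the edges of `G`. -/
noncomputable def ILLY {V : Type*} [Fintype V] [DecidableEq V] (G : SimpleGraph V)
    [DecidableRel G.Adj] (κ₀ : ℝ) : ℝ :=
  ∑ e ∈ G.edgeFinset,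
    Sym2.lift ⟨fun x y => max 0 (κ₀ - kappaLLY G x y),
      fun x y => by simp only []; rw [kappaLLY_symm]⟩ e

/-- The diameter of a finite graph. -/
noncomputable def gDiam {V : Type*} [Fintype V] (G : SimpleGraph V) : ℕ :=
  Finset.univ.sup fun p : V × V => G.dist p.1 p.2


section BonnetMyersAux

open Filter Topology

variable {V : Type*} [Fintype V] [DecidableEq V] (G : SimpleGraph V) [DecidableRel G.Adj]

lemma aux_degree_pos (hG : G.Connected) {v w : V} (hvw : v ≠ w) : 0 < G.degree v := by
  obtain ⟨p⟩ := hG.preconnected v w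
  cases p with
  | nil => exact absurd rfl hvw
  | cons h q => exact (G.degree_pos_iff_exists_adj v).mpr ⟨_, h⟩

lemma lazyWalk_nonneg {α : ℝ} (h0 : 0 ≤ α) (h1 : α ≤ 1) (x v : V) :
    0 ≤ lazyWalk G α x v := by
  unfold lazyWalk
  split_ifs with h h'
  · exact h0
  · apply div_nonneg (by linarith) (by positivity)
  · exact le_refl 0

lemma lazyWalk_apply_self (α : ℝ) (x : V) : lazyWalk G α x x = α := by simp [lazyWalk]

lemma lazyWalk_apply_adj (α : ℝ) {x v : V} (h : G.Adj x v) :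
    lazyWalk G α x v = (1 - α) / (G.degree x) := by
  have hvx : v ≠ x := fun e => G.irrefl (e ▸ h)
  simp [lazyWalk, hvx, h]

lemma lazyWalk_apply_other (α : ℝ) {x v : V} (hv : v ≠ x) (h : ¬ G.Adj x v) :
    lazyWalk G α x v = 0 := by simp [lazyWalk, hv, h]

lemma lazyWalk_eq_add (α : ℝ) (x v : V) :
    lazyWalk G α x v = (if v = x then α else 0)
      + (if G.Adj x v then (1 - α) / (G.degree x) else 0) := by
  unfold lazyWalk
  by_cases h : v = x
  · subst h; simp
  · simp [h]

lemma sum_lazyWalk {α : ℝ} (x : V) (hd : 0 < G.degree x) :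
    ∑ v, lazyWalk G α x v = 1 := by
  have hdeg : (G.degree x : ℝ) ≠ 0 := Nat.cast_ne_zero.mpr hd.ne'
  simp only [lazyWalk_eq_add]
  rw [Finset.sum_add_distrib, Finset.sum_ite_eq' Finset.univ x fun _ => α]
  have h2 : ∑ v, (if G.Adj x v then (1 - α) / (G.degree x : ℝ) else 0)
      = (G.degree x : ℝ) * ((1 - α) / (G.degree x : ℝ)) := by
    rw [← Finset.sum_filter, ← SimpleGraph.neighborFinset_eq_filter, Finset.sum_const,
      SimpleGraph.card_neighborFinset_eq_degree, nsmul_eq_mul]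
  rw [h2]
  field_simp
  rw [if_pos (Finset.mem_univ x)]
  ring

lemma lazyWalk_isProb {α : ℝ} (h0 : 0 ≤ α) (h1 : α ≤ 1) {x : V} (hd : 0 < G.degree x) :
    IsProbMeasure (lazyWalk G α x) :=
  ⟨lazyWalk_nonneg G h0 h1 x, sum_lazyWalk G x hd⟩

end BonnetMyersAux

section CouplingAux

variable {V : Type*} [Fintype V]

lemma delta_isProb [DecidableEq V] (x : V) :
    IsProbMeasure (fun v => if v = x then (1:ℝ) else 0) :=
  ⟨fun v => by dsimp only; split_ifs <;> norm_num, by simp⟩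

lemma prod_isCoupling {m₁ m₂ : V → ℝ} (h₁ : IsProbMeasure m₁) (h₂ : IsProbMeasure m₂) :
    IsCoupling (fun p : V × V => m₁ p.1 * m₂ p.2) m₁ m₂ := by
  refine ⟨fun p => mul_nonneg (h₁.1 _) (h₂.1 _), fun x => ?_, fun y => ?_⟩
  · simp only
    rw [← Finset.mul_sum, h₂.2, mul_one]
  · simp only
    rw [← Finset.sum_mul, h₁.2, one_mul]

lemma cost_nonneg {d : V → V → ℝ} (hd : ∀ a b, 0 ≤ d a b) {A : V × V → ℝ}
    (hA : ∀ p, 0 ≤ A p) : 0 ≤ ∑ p : V × V, A p * d p.1 p.2 :=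
  Finset.sum_nonneg fun p _ => mul_nonneg (hA p) (hd _ _)

lemma W_le_cost {d : V → V → ℝ} (hd : ∀ a b, 0 ≤ d a b) {A : V × V → ℝ} {m₁ m₂ : V → ℝ}
    (hA : IsCoupling A m₁ m₂) :
    W d m₁ m₂ ≤ ∑ p : V × V, A p * d p.1 p.2 := by
  apply csInf_le
  · refine ⟨0, ?_⟩
    rintro c ⟨B, hB, rfl⟩
    exact cost_nonneg hd hB.1
  · exact ⟨A, hA, rfl⟩

lemma le_W {d : V → V → ℝ} {m₁ m₂ : V → ℝ} (hne : ∃ A, IsCoupling A m₁ m₂) {b : ℝ}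
    (hb : ∀ A, IsCoupling A m₁ m₂ → b ≤ ∑ p : V × V, A p * d p.1 p.2) :
    b ≤ W d m₁ m₂ := by
  apply le_csInf
  · obtain ⟨A, hA⟩ := hne
    exact ⟨_, A, hA, rfl⟩
  · rintro c ⟨A, hA, rfl⟩
    exact hb A hA

lemma coupling_fst_sum {A : V × V → ℝ} {m₁ m₂ : V → ℝ} (hA : IsCoupling A m₁ m₂) (f : V → ℝ) :
    ∑ p : V × V, A p * f p.1 = ∑ z, m₁ z * f z := by
  rw [Fintype.sum_prod_type]
  refine Finset.sum_congr rfl fun z _ => ?_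
  trans (∑ w, A (z, w)) * f z
  · rw [Finset.sum_mul]
  · rw [hA.2.1]

lemma coupling_snd_sum {A : V × V → ℝ} {m₁ m₂ : V → ℝ} (hA : IsCoupling A m₁ m₂) (f : V → ℝ) :
    ∑ p : V × V, A p * f p.2 = ∑ z, m₂ z * f z := by
  rw [Fintype.sum_prod_type, Finset.sum_comm]
  refine Finset.sum_congr rfl fun z _ => ?_
  trans (∑ w, A (w, z)) * f z
  · rw [Finset.sum_mul]
  · rw [hA.2.2]

lemma combo_isCoupling {A B : V × V → ℝ} {m₁ m₂ n₁ n₂ : V → ℝ} {t : ℝ} (h0 : 0 ≤ t)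
    (h1 : t ≤ 1) (hA : IsCoupling A m₁ m₂) (hB : IsCoupling B n₁ n₂) :
    IsCoupling (fun p => t * A p + (1 - t) * B p)
      (fun v => t * m₁ v + (1 - t) * n₁ v) (fun v => t * m₂ v + (1 - t) * n₂ v) := by
  refine ⟨fun p => add_nonneg (mul_nonneg h0 (hA.1 p))
    (mul_nonneg (by linarith) (hB.1 p)), fun v => ?_, fun v => ?_⟩
  · simp only
    rw [Finset.sum_add_distrib, ← Finset.mul_sum, ← Finset.mul_sum, hA.2.1 v, hB.2.1 v]
  · simp only
    rw [Finset.sum_add_distrib, ← Finset.mul_sum, ← Finset.mul_sum, hA.2.2 v, hB.2.2 v]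

end CouplingAux

section BMMain

open Filter Topology

variable {V : Type*} [Fintype V] [DecidableEq V] (G : SimpleGraph V) [DecidableRel G.Adj]

lemma delta_cost (x y : V) :
    ∑ p : V × V, ((if p.1 = x then (1:ℝ) else 0) * (if p.2 = y then (1:ℝ) else 0))
        * (G.dist p.1 p.2 : ℝ) = (G.dist x y : ℝ) := by
  rw [Fintype.sum_prod_type]
  have h : ∀ a : V, ∑ b, ((if a = x then (1:ℝ) else 0) * (if b = y then (1:ℝ) else 0))
      * (G.dist a b : ℝ) = if a = x then (G.dist a y : ℝ) else 0 := by
    intro a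
    by_cases ha : a = x
    · subst ha
      simp [ite_mul]
    · simp [ha]
  rw [Finset.sum_congr rfl fun a _ => h a, Finset.sum_ite_eq' Finset.univ x
    fun a => (G.dist a y : ℝ)]
  simp

lemma W_lower_bound (hG : G.Connected) {x y : V} (hxy : x ≠ y) {α : ℝ}
    (h0 : 0 ≤ α) (h1 : α < 1) :
    (G.dist x y : ℝ) - 2 * (1 - α) ≤
      W (fun a b => (G.dist a b : ℝ)) (lazyWalk G α x) (lazyWalk G α y) := by
  have hdx := aux_degree_pos G hG hxy
  have hdy := aux_degree_pos G hG hxy.symm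
  have hprobx := lazyWalk_isProb G h0 h1.le hdx
  have hproby := lazyWalk_isProb G h0 h1.le hdy
  apply le_W ⟨_, prod_isCoupling hprobx hproby⟩
  intro A hA
  set f : V → ℝ := fun z => (G.dist z y : ℝ) with hf
  set d : ℝ := (G.dist x y : ℝ) with hd
  have hd1 : (1:ℝ) ≤ d := by
    have := hG.pos_dist_of_ne hxy
    rw [hd]
    exact_mod_cast this
  have hstep : ∑ p : V × V, A p * (f p.1 - f p.2)
      ≤ ∑ p : V × V, A p * (G.dist p.1 p.2 : ℝ) := by
    apply Finset.sum_le_sum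
    intro p _
    apply mul_le_mul_of_nonneg_left _ (hA.1 p)
    have htri : G.dist p.1 y ≤ G.dist p.1 p.2 + G.dist p.2 y := hG.dist_triangle
    have htri' : (G.dist p.1 y : ℝ) ≤ (G.dist p.1 p.2 : ℝ) + (G.dist p.2 y : ℝ) := by
      exact_mod_cast htri
    simp only [hf]
    linarith
  have e1 : ∑ p : V × V, A p * (f p.1 - f p.2)
      = ∑ z, lazyWalk G α x z * f z - ∑ z, lazyWalk G α y z * f z := by
    simp only [mul_sub]
    rw [Finset.sum_sub_distrib, coupling_fst_sum hA, coupling_snd_sum hA]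
  have hx : d - (1 - α) ≤ ∑ z, lazyWalk G α x z * f z := by
    have key : ∀ z, (if z = x then α * d - α * (d - 1) else 0)
        + lazyWalk G α x z * (d - 1) ≤ lazyWalk G α x z * f z := by
      intro z
      by_cases hz : z = x
      · rw [if_pos hz, hz, lazyWalk_apply_self]
        have hfx : f x = d := rfl
        rw [hfx]
        have heq : α * d - α * (d - 1) + α * (d - 1) = α * d := by ring
        linarith
      · rw [if_neg hz, zero_add]
        by_cases hadj : G.Adj x z
        · apply mul_le_mul_of_nonneg_left _ (lazyWalk_nonneg G h0 h1.le x z)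
          have htri : G.dist x y ≤ G.dist x z + G.dist z y := hG.dist_triangle
          have hxz : G.dist x z = 1 := SimpleGraph.dist_eq_one_iff_adj.mpr hadj
          rw [hxz] at htri
          have : (G.dist x y : ℝ) ≤ 1 + (G.dist z y : ℝ) := by exact_mod_cast htri
          simp only [hf]
          rw [← hd] at this
          linarith
        · rw [lazyWalk_apply_other G α hz hadj]
          simp
    have hsum : ∑ z, ((if z = x then α * d - α * (d - 1) else 0) + lazyWalk G α x z * (d - 1))
        ≤ ∑ z, lazyWalk G α x z * f z :=
      Finset.sum_le_sum fun z _ => key z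
    rw [Finset.sum_add_distrib, Finset.sum_ite_eq' Finset.univ x
      (fun _ => α * d - α * (d - 1)), if_pos (Finset.mem_univ x),
      ← Finset.sum_mul, sum_lazyWalk G x hdx, one_mul] at hsum
    calc d - (1 - α) = (α * d - α * (d - 1)) + (d - 1) := by ring
    _ ≤ _ := hsum
  have hy : ∑ z, lazyWalk G α y z * f z ≤ 1 - α := by
    have key : ∀ z, lazyWalk G α y z * f z
        ≤ lazyWalk G α y z - (if z = y then lazyWalk G α y z else 0) := by
      intro z
      by_cases hz : z = y
      · subst hz
        have : f z = 0 := by simp [hf]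
        rw [this, if_pos rfl]
        simp
      · rw [if_neg hz, sub_zero]
        by_cases hadj : G.Adj y z
        · have hzy : G.dist z y = 1 := SimpleGraph.dist_eq_one_iff_adj.mpr hadj.symm
          have : f z = 1 := by rw [hf]; simp only; rw [hzy]; norm_num
          rw [this, mul_one]
        · rw [lazyWalk_apply_other G α hz hadj]
          simp
    have hsum : ∑ z, lazyWalk G α y z * f z
        ≤ ∑ z, (lazyWalk G α y z - (if z = y then lazyWalk G α y z else 0)) :=
      Finset.sum_le_sum fun z _ => key z
    rw [Finset.sum_sub_distrib, sum_lazyWalk G y hdy, Finset.sum_ite_eq' Finset.univ y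
      (fun z => lazyWalk G α y z), if_pos (Finset.mem_univ y), lazyWalk_apply_self] at hsum
    linarith
  have : ∑ p : V × V, A p * (fun a b => (G.dist a b : ℝ)) p.1 p.2
      = ∑ p : V × V, A p * (G.dist p.1 p.2 : ℝ) := rfl
  rw [this]
  linarith [hstep, e1 ▸ hstep]

lemma kappaAlpha_le_bound (hG : G.Connected) {x y : V} (hxy : x ≠ y) {α : ℝ}
    (h0 : 0 ≤ α) (h1 : α < 1) :
    kappaAlpha G α x y ≤ 2 * (1 - α) / (G.dist x y : ℝ) := by
  have hdpos : (0:ℝ) < (G.dist x y : ℝ) := by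
    exact_mod_cast hG.pos_dist_of_ne hxy
  have hW := W_lower_bound G hG hxy h0 h1
  unfold kappaAlpha
  have h2 : ((G.dist x y : ℝ) - 2 * (1 - α)) / (G.dist x y : ℝ)
      ≤ W (fun a b => (G.dist a b : ℝ)) (lazyWalk G α x) (lazyWalk G α y) / (G.dist x y : ℝ) := by
    gcongr
  rw [sub_div, div_self hdpos.ne'] at h2
  linarith

lemma lazyWalk_decomp {α α' : ℝ} (h1' : α' < 1) (z v : V) :
    lazyWalk G α z v = ((α - α') / (1 - α')) * (if v = z then 1 else 0)
      + ((1 - α) / (1 - α')) * lazyWalk G α' z v := by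
  have hne : (1 : ℝ) - α' ≠ 0 := by linarith
  unfold lazyWalk
  by_cases h : v = z
  · rw [if_pos h, if_pos h, if_pos h]
    field_simp
    ring
  · rw [if_neg h, if_neg h, if_neg h]
    by_cases hadj : G.Adj z v
    · rw [if_pos hadj, if_pos hadj]
      have hdeg : 0 < G.degree z := (G.degree_pos_iff_exists_adj z).mpr ⟨v, hadj⟩
      have hdeg' : (G.degree z : ℝ) ≠ 0 := Nat.cast_ne_zero.mpr hdeg.ne'
      field_simp
      ring
    · rw [if_neg hadj, if_neg hadj]
      simp

lemma kappa_ratio_mono (hG : G.Connected) (x y : V) (hxy : x ≠ y) :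
    MonotoneOn (fun α => kappaAlpha G α x y / (1 - α)) (Set.Ico (0:ℝ) 1) := by
  rintro α' ⟨h0', h1'⟩ α ⟨h0, h1⟩ hle
  simp only
  have h1α' : (0:ℝ) < 1 - α' := by linarith
  have h1α : (0:ℝ) < 1 - α := by linarith
  set t : ℝ := (α - α') / (1 - α') with ht
  have ht0 : 0 ≤ t := div_nonneg (by linarith) h1α'.le
  have ht1' : 1 - t = (1 - α) / (1 - α') := by
    rw [ht]
    field_simp
    ring
  have h1t : (0:ℝ) < 1 - t := by
    rw [ht1']
    positivity
  have ht1 : t ≤ 1 := by linarith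
  have hprod : (1 - t) * (1 - α') = 1 - α := by
    rw [ht1']
    field_simp
  have hdx := aux_degree_pos G hG hxy
  have hdy := aux_degree_pos G hG hxy.symm
  have hdpos : (0:ℝ) < (G.dist x y : ℝ) := by
    exact_mod_cast hG.pos_dist_of_ne hxy
  set dd : V → V → ℝ := fun a b => (G.dist a b : ℝ) with hdd
  have hddnn : ∀ a b, 0 ≤ dd a b := fun a b => by positivity
  set Wα := W dd (lazyWalk G α x) (lazyWalk G α y) with hWα
  set Wα' := W dd (lazyWalk G α' x) (lazyWalk G α' y) with hWα'
  -- convexity step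
  have step : ∀ A', IsCoupling A' (lazyWalk G α' x) (lazyWalk G α' y) →
      Wα ≤ t * (G.dist x y : ℝ) + (1 - t) * ∑ p : V × V, A' p * dd p.1 p.2 := by
    intro A' hA'
    have hD : IsCoupling (fun p : V × V => (if p.1 = x then (1:ℝ) else 0)
        * (if p.2 = y then (1:ℝ) else 0)) (fun v => if v = x then (1:ℝ) else 0)
        (fun v => if v = y then (1:ℝ) else 0) := prod_isCoupling (delta_isProb x) (delta_isProb y)
    have hcomb := combo_isCoupling ht0 ht1 hD hA'
    have hmx : (fun v => t * (if v = x then (1:ℝ) else 0) + (1 - t) * lazyWalk G α' x v)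
        = lazyWalk G α x := by
      funext v
      conv_rhs => rw [lazyWalk_decomp (α := α) G h1' x v]
      rw [ht1', ht]
    have hmy : (fun v => t * (if v = y then (1:ℝ) else 0) + (1 - t) * lazyWalk G α' y v)
        = lazyWalk G α y := by
      funext v
      conv_rhs => rw [lazyWalk_decomp (α := α) G h1' y v]
      rw [ht1', ht]
    rw [hmx, hmy] at hcomb
    have hle2 := W_le_cost hddnn hcomb
    have hsplit : ∑ p : V × V, (t * ((if p.1 = x then (1:ℝ) else 0)
          * (if p.2 = y then (1:ℝ) else 0)) + (1 - t) * A' p) * dd p.1 p.2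
        = t * (∑ p : V × V, ((if p.1 = x then (1:ℝ) else 0)
          * (if p.2 = y then (1:ℝ) else 0)) * dd p.1 p.2)
          + (1 - t) * ∑ p : V × V, A' p * dd p.1 p.2 := by
      rw [Finset.mul_sum, Finset.mul_sum, ← Finset.sum_add_distrib]
      refine Finset.sum_congr rfl fun p _ => by ring
    rw [hsplit] at hle2
    simp only [hdd] at hle2
    rw [delta_cost G x y] at hle2
    simp only [hWα, hdd]
    exact hle2
  have hexists' : ∃ A, IsCoupling A (lazyWalk G α' x) (lazyWalk G α' y) :=
    ⟨_, prod_isCoupling (lazyWalk_isProb G h0' (by linarith) hdx)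
      (lazyWalk_isProb G h0' (by linarith) hdy)⟩
  have hW' : (Wα - t * (G.dist x y : ℝ)) / (1 - t) ≤ Wα' := by
    apply le_W hexists'
    intro A' hA'
    rw [div_le_iff₀ h1t]
    have := step A' hA'
    linarith
  rw [div_le_iff₀ h1t] at hW'
  have hWmono : Wα ≤ t * (G.dist x y : ℝ) + (1 - t) * Wα' := by linarith
  -- kappa inequality
  have hk : (1 - t) * kappaAlpha G α' x y ≤ kappaAlpha G α x y := by
    have h2 : Wα / (G.dist x y : ℝ)
        ≤ (t * (G.dist x y : ℝ) + (1 - t) * Wα') / (G.dist x y : ℝ) := by gcongr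
    rw [add_div, mul_div_assoc, mul_div_assoc, div_self hdpos.ne', mul_one] at h2
    have hkdefα : kappaAlpha G α x y = 1 - Wα / (G.dist x y : ℝ) := rfl
    have hkdefα' : kappaAlpha G α' x y = 1 - Wα' / (G.dist x y : ℝ) := rfl
    rw [hkdefα, hkdefα']
    nlinarith [h2]
  rw [div_le_div_iff₀ h1α' h1α]
  have hrw : kappaAlpha G α' x y * (1 - α)
      = ((1 - t) * kappaAlpha G α' x y) * (1 - α') := by
    rw [mul_comm (1 - t) (kappaAlpha G α' x y), mul_assoc, hprod]
  rw [hrw]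
  exact mul_le_mul_of_nonneg_right hk h1α'.le

end BMMain

/-- Local Bonnet–Myers estimate: if `κ_LLY(x,y) > 0` then `d(x,y) ≤ ⌊2/κ_LLY(x,y)⌋`. -/
theorem stmt_8 {V : Type*} [Fintype V] [DecidableEq V] (G : SimpleGraph V)
    [DecidableRel G.Adj] (hG : G.Connected) (x y : V) (hxy : x ≠ y)
    (hpos : 0 < kappaLLY G x y) :
    (G.dist x y : ℤ) ≤ ⌊2 / kappaLLY G x y⌋ := by
  classical
  have hd0 : 0 < G.dist x y := hG.pos_dist_of_ne hxy
  have hdpos : (0:ℝ) < (G.dist x y : ℝ) := by exact_mod_cast hd0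
  set g : ℝ → ℝ := fun α => kappaAlpha G α x y / (1 - α) with hg
  have hub : ∀ α ∈ Set.Ico (0:ℝ) 1, g α ≤ 2 / (G.dist x y : ℝ) := by
    rintro α ⟨h0, h1⟩
    have h1α : (0:ℝ) < 1 - α := by linarith
    have hk := kappaAlpha_le_bound G hG hxy h0 h1
    rw [hg]
    simp only
    rw [div_le_div_iff₀ h1α hdpos]
    have h2 := (le_div_iff₀ hdpos).mp hk
    linarith
  have hmono : MonotoneOn g (Set.Ioo (0:ℝ) 1) :=
    (kappa_ratio_mono G hG x y hxy).mono Set.Ioo_subset_Ico_self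
  have hnonempty : (Set.Ioo (0:ℝ) 1).Nonempty := ⟨1/2, by norm_num⟩
  have hbdd : BddAbove (g '' Set.Ioo (0:ℝ) 1) := by
    refine ⟨2 / (G.dist x y : ℝ), ?_⟩
    rintro _ ⟨a, ha, rfl⟩
    exact hub a (Set.Ioo_subset_Ico_self ha)
  have htend : Filter.Tendsto g (nhdsWithin 1 (Set.Iio 1))
      (nhds (sSup (g '' Set.Ioo (0:ℝ) 1))) :=
    MonotoneOn.tendsto_nhdsWithin_Ioo_left hnonempty hmono hbdd
  have hle : nhdsWithin (1:ℝ) (Set.Ico 0 1) ≤ nhdsWithin 1 (Set.Iio 1) :=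
    nhdsWithin_mono _ fun a ha => ha.2
  have htend' : Filter.Tendsto g (nhdsWithin 1 (Set.Ico (0:ℝ) 1))
      (nhds (sSup (g '' Set.Ioo (0:ℝ) 1))) := htend.mono_left hle
  haveI hne : (nhdsWithin (1:ℝ) (Set.Ico 0 1)).NeBot := by
    rw [← mem_closure_iff_nhdsWithin_neBot, closure_Ico (by norm_num : (0:ℝ) ≠ 1)]
    exact ⟨by norm_num, le_refl 1⟩
  have hLLY : kappaLLY G x y = sSup (g '' Set.Ioo (0:ℝ) 1) := by
    unfold kappaLLY
    exact htend'.limUnder_eq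
  have hsup_le : sSup (g '' Set.Ioo (0:ℝ) 1) ≤ 2 / (G.dist x y : ℝ) := by
    apply csSup_le (hnonempty.image g)
    rintro _ ⟨a, ha, rfl⟩
    exact hub a (Set.Ioo_subset_Ico_self ha)
  have hκle : kappaLLY G x y ≤ 2 / (G.dist x y : ℝ) := hLLY ▸ hsup_le
  rw [Int.le_floor]
  push_cast
  rw [le_div_iff₀ hpos]
  have h2 := (le_div_iff₀ hdpos).mp hκle
  linarith
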